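/- The decision boundary { x : TP(x) = 1/2 } of the tied prototype model with 0 < σ_F < σ_B is the sphere of radius r around p, where r² = 2(ln(p_F/p_B) + d ln(σ_B/σ_F)) / (1/σ_F² − 1/σ_B²), provided ln(p_F/p_B) + d ln(σ_B/σ_F) > 0. -/

import Mathlib

open Real

/-- Isotropic Gaussian density `φ(p,σ;x)` on `ℝ^d`. -/
noncomputable def gaussPdf (d : ℕ) (p : EuclideanSpace ℝ (Fin d)) (σ : ℝ)
    (x : EuclideanSpace ℝ (Fin d)) : ℝ :=
  (2 * π * σ ^ 2) ^ (-(d : ℝ) / 2) * Real.exp (-‖x - p‖ ^ 2 / (2 * σ ^ 2))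

lemma gaussPdf_pos (d : ℕ) (p : EuclideanSpace ℝ (Fin d)) (σ : ℝ) (hσ : 0 < σ)
    (x : EuclideanSpace ℝ (Fin d)) : 0 < gaussPdf d p σ x := by
  unfold gaussPdf
  have h2 : (0:ℝ) < 2 * π * σ ^ 2 := by positivity
  positivity

lemma log_gaussPdf (d : ℕ) (p : EuclideanSpace ℝ (Fin d)) (σ : ℝ) (hσ : 0 < σ)
    (x : EuclideanSpace ℝ (Fin d)) :
    Real.log (gaussPdf d p σ x)
      = (-(d:ℝ)/2) * (Real.log 2 + Real.log π + 2 * Real.log σ)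
        + (-‖x - p‖ ^ 2 / (2 * σ ^ 2)) := by
  unfold gaussPdf
  have h2 : (0:ℝ) < 2 * π * σ ^ 2 := by positivity
  have hπ : (0:ℝ) < π := Real.pi_pos
  rw [Real.log_mul (by positivity) (Real.exp_pos _).ne', Real.log_rpow h2,
    Real.log_exp, Real.log_mul (by positivity) (by positivity),
    Real.log_mul (by norm_num) hπ.ne', Real.log_pow]
  push_cast
  ring

theorem tied_posterior_decision_boundary (d : ℕ) (p : EuclideanSpace ℝ (Fin d))
    (σF σB pF pB r : ℝ) (hF : 0 < σF) (hFB : σF < σB) (hpF : 0 < pF) (hpB : 0 < pB)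
    (hpos : 0 < Real.log (pF / pB) + d * Real.log (σB / σF)) (hr : 0 ≤ r)
    (hr2 : r ^ 2 = 2 * (Real.log (pF / pB) + d * Real.log (σB / σF)) /
      (1 / σF ^ 2 - 1 / σB ^ 2)) :
    {x : EuclideanSpace ℝ (Fin d) |
        pF * gaussPdf d p σF x / (pF * gaussPdf d p σF x + pB * gaussPdf d p σB x)
          = 1 / 2} = Metric.sphere p r := by
  have hB : 0 < σB := hF.trans hFB
  have hsq : σF ^ 2 < σB ^ 2 := by nlinarith
  have hne : σB ^ 2 - σF ^ 2 ≠ 0 := ne_of_gt (by linarith)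
  have hlpq : Real.log (pF / pB) = Real.log pF - Real.log pB :=
    Real.log_div hpF.ne' hpB.ne'
  have hls : Real.log (σB / σF) = Real.log σB - Real.log σF :=
    Real.log_div hB.ne' hF.ne'
  have hceq : 1 / σF ^ 2 - 1 / σB ^ 2 = (σB ^ 2 - σF ^ 2) / (σF ^ 2 * σB ^ 2) := by
    field_simp
  have hr2' : r ^ 2 * (σB ^ 2 - σF ^ 2)
      = 2 * ((Real.log pF - Real.log pB) + d * (Real.log σB - Real.log σF))
          * (σF ^ 2 * σB ^ 2) := by
    rw [hr2, hceq, hlpq, hls]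
    field_simp
  ext x
  simp only [Set.mem_setOf_eq, Metric.mem_sphere, dist_eq_norm]
  have hφF := gaussPdf_pos d p σF hF x
  have hφB := gaussPdf_pos d p σB hB x
  have ha : 0 < pF * gaussPdf d p σF x := mul_pos hpF hφF
  have hb : 0 < pB * gaussPdf d p σB x := mul_pos hpB hφB
  have step1 : (pF * gaussPdf d p σF x / (pF * gaussPdf d p σF x + pB * gaussPdf d p σB x)
      = 1 / 2) ↔ pF * gaussPdf d p σF x = pB * gaussPdf d p σB x := by
    rw [div_eq_div_iff (by linarith) (by norm_num)]
    constructor <;> intro h <;> linarith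
  rw [step1]
  have step2 : (pF * gaussPdf d p σF x = pB * gaussPdf d p σB x)
      ↔ Real.log (pF * gaussPdf d p σF x) = Real.log (pB * gaussPdf d p σB x) := by
    constructor
    · intro h; rw [h]
    · intro h; rw [← Real.exp_log ha, ← Real.exp_log hb, h]
  rw [step2, Real.log_mul hpF.ne' hφF.ne', Real.log_mul hpB.ne' hφB.ne',
    log_gaussPdf d p σF hF x, log_gaussPdf d p σB hB x]
  set t := ‖x - p‖ ^ 2 with ht
  have step3 : (‖x - p‖ = r) ↔ t = r ^ 2 := by
    constructor
    · intro h; rw [ht, h]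
    · intro h
      have h1 : (‖x - p‖ - r) * (‖x - p‖ + r) = 0 := by
        have h2 : ‖x - p‖ ^ 2 = r ^ 2 := by rw [← ht]; exact h
        linear_combination h2
      rcases mul_eq_zero.mp h1 with h2 | h2
      · linarith
      · have := norm_nonneg (x - p); linarith
  rw [step3]
  constructor
  · intro h
    field_simp at h
    have hkey : t * (σB ^ 2 - σF ^ 2) = r ^ 2 * (σB ^ 2 - σF ^ 2) := by
      linear_combination (-1 : ℝ) * h - hr2'
    exact mul_right_cancel₀ hne hkey
  · intro h
    rw [h]
    field_simp
    linear_combination (-1 : ℝ) * hr2'
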